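/- (Theorem 1) Assume the spectra of A and S are disjoint. Let M_des ∈ ℝ^{p×ν} be given, let (Π_x, Π_ξ) solve the closed-loop Sylvester equation, let Π solve ΠS = AΠ + PL, and let Π̂ solve Π̂S = AΠ̂ + B·(HΠ_ξ). Then the closed-loop moment satisfies M_cl = M_des if and only if the compensator moment M_c = HΠ_ξ satisfies T_S(M_c) = M_des − M_open, i.e., CΠ̂ + D·(HΠ_ξ) = M_des − (CΠ + QL). -/

import Mathlib

open Matrix

section AuxSylvester
open Polynomial

lemma charpoly_eval_eq {n : ℕ} (M : Matrix (Fin n) (Fin n) ℂ) (μ : ℂ) :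
    M.charpoly.eval μ = (Matrix.scalar (Fin n) μ - M).det := by
  rw [Matrix.charpoly, eval_det, matPolyEquiv_charmatrix]
  simp

lemma root_mem_spectrum {n : ℕ} (hn : 0 < n) (M : Matrix (Fin n) (Fin n) ℂ) (μ : ℂ)
    (h : M.charpoly.eval μ = 0) : μ ∈ spectrum ℂ M := by
  rw [spectrum.mem_iff]
  intro hu
  rw [Matrix.isUnit_iff_isUnit_det] at hu
  have : NeZero n := ⟨hn.ne'⟩
  have h2 : (algebraMap ℂ (Matrix (Fin n) (Fin n) ℂ)) μ = Matrix.scalar (Fin n) μ := rfl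
  rw [h2, ← charpoly_eval_eq, h] at hu
  exact hu.ne_zero rfl

lemma sylvester_unique {n ν : ℕ}
    (A : Matrix (Fin n) (Fin n) ℝ) (S : Matrix (Fin ν) (Fin ν) ℝ)
    (hdisj : ∀ μ : ℂ, ¬(μ ∈ spectrum ℂ (A.map Complex.ofReal) ∧
      μ ∈ spectrum ℂ (S.map Complex.ofReal)))
    (X : Matrix (Fin n) (Fin ν) ℝ) (hX : X * S = A * X) : X = 0 := by
  rcases Nat.eq_zero_or_pos n with hn | hn
  · subst hn; ext i j; exact absurd i.2 (by omega)
  set A' := A.map (Complex.ofReal) with hA'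
  set S' := S.map (Complex.ofReal) with hS'
  set X' := X.map (Complex.ofReal) with hX'
  have hX'' : X' * S' = A' * X' := by
    ext i j
    simp only [hX', hS', hA', Matrix.mul_apply, Matrix.map_apply, ← Complex.ofReal_mul,
      ← Complex.ofReal_sum]
    rw [← Matrix.mul_apply, ← Matrix.mul_apply, hX]
  have hpow : ∀ k : ℕ, X' * S' ^ k = A' ^ k * X' := by
    intro k
    induction k with
    | zero => simp
    | succ k ih =>
      rw [pow_succ, pow_succ, ← Matrix.mul_assoc, ih, Matrix.mul_assoc, hX'',
        ← Matrix.mul_assoc]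
  have comm_poly : ∀ p : ℂ[X], X' * (aeval S') p = (aeval A') p * X' := by
    intro p
    induction p using Polynomial.induction_on' with
    | add p q hp hq => rw [map_add, map_add, Matrix.mul_add, Matrix.add_mul, hp, hq]
    | monomial k c =>
      rw [aeval_monomial, aeval_monomial, Algebra.algebraMap_eq_smul_one,
        Algebra.algebraMap_eq_smul_one, smul_one_mul, smul_one_mul, Matrix.mul_smul,
        hpow k, Matrix.smul_mul]
  have key := comm_poly A'.charpoly
  rw [Matrix.aeval_self_charpoly, Matrix.zero_mul] at key
  have hu : IsUnit ((aeval S') A'.charpoly) := by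
    by_contra hu
    have h0 : (0 : ℂ) ∈ spectrum ℂ ((aeval S') A'.charpoly) :=
      spectrum.zero_mem_iff (R := ℂ) |>.mpr hu
    have hdeg : 0 < A'.charpoly.degree := by
      rw [Matrix.charpoly_degree_eq_dim]
      exact_mod_cast (by simpa using hn)
    rw [spectrum.map_polynomial_aeval_of_degree_pos S' A'.charpoly hdeg] at h0
    obtain ⟨μ, hμS, hμ0⟩ := h0
    exact hdisj μ ⟨root_mem_spectrum hn A' μ hμ0, hμS⟩
  have hz : X' = 0 := by
    obtain ⟨u, hu⟩ := hu
    have h1 : X' * (↑u : Matrix (Fin ν) (Fin ν) ℂ) * (↑u⁻¹ : Matrix (Fin ν) (Fin ν) ℂ) = 0 := by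
      rw [hu, key, Matrix.zero_mul]
    rwa [Matrix.mul_assoc, Units.mul_inv, Matrix.mul_one] at h1
  ext i j
  have := congrFun (congrFun hz i) j
  simpa [hX'] using this

end AuxSylvester

/-- **Theorem 1.** Assuming disjoint spectra of `A` and `S`, with `(Π_x, Π_ξ)`
solving the closed-loop Sylvester equation, `Π` solving `ΠS = AΠ + PL` and `Π̂` solving
`Π̂S = AΠ̂ + B(HΠ_ξ)`, the closed-loop moment satisfies `M_cl = M_des` if and only if the
compensator moment `M_c = HΠ_ξ` satisfies `T_S(M_c) = M_des - M_open`. -/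
theorem moment_assignment_iff (n m p q ν ρ : ℕ)
    (A : Matrix (Fin n) (Fin n) ℝ) (B : Matrix (Fin n) (Fin m) ℝ)
    (C : Matrix (Fin p) (Fin n) ℝ) (D : Matrix (Fin p) (Fin m) ℝ)
    (P : Matrix (Fin n) (Fin q) ℝ) (Q : Matrix (Fin p) (Fin q) ℝ)
    (S : Matrix (Fin ν) (Fin ν) ℝ) (L : Matrix (Fin q) (Fin ν) ℝ)
    (F : Matrix (Fin ρ) (Fin ρ) ℝ) (G : Matrix (Fin ρ) (Fin p) ℝ)
    (H : Matrix (Fin m) (Fin ρ) ℝ)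
    (Mdes : Matrix (Fin p) (Fin ν) ℝ)
    (hdisj : ∀ μ : ℂ, ¬(μ ∈ spectrum ℂ (A.map Complex.ofReal) ∧
      μ ∈ spectrum ℂ (S.map Complex.ofReal)))
    (Pix : Matrix (Fin n) (Fin ν) ℝ) (Piξ : Matrix (Fin ρ) (Fin ν) ℝ)
    (hcl : Matrix.fromRows Pix Piξ * S =
      Matrix.fromBlocks A (B * H) (G * C) (F + G * D * H) * Matrix.fromRows Pix Piξ +
        Matrix.fromRows P (G * Q) * L)
    (Pi : Matrix (Fin n) (Fin ν) ℝ) (hPi : Pi * S = A * Pi + P * L)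
    (Pihat : Matrix (Fin n) (Fin ν) ℝ)
    (hPihat : Pihat * S = A * Pihat + B * (H * Piξ)) :
    C * Pix + D * (H * Piξ) + Q * L = Mdes ↔
      C * Pihat + D * (H * Piξ) = Mdes - (C * Pi + Q * L) := by
  have htop : Pix * S = A * Pix + B * H * Piξ + P * L := by
    rw [Matrix.fromBlocks_mul_fromRows, Matrix.fromRows_mul, Matrix.fromRows_mul] at hcl
    ext i j
    have h := congrFun (congrFun hcl (Sum.inl i)) j
    simp [Matrix.fromRows_apply_inl, Matrix.add_apply] at h ⊢
    linarith
  have hX : (Pix - (Pi + Pihat)) * S = A * (Pix - (Pi + Pihat)) := by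
    rw [Matrix.sub_mul, Matrix.add_mul, htop, hPi, hPihat, Matrix.mul_sub, Matrix.mul_add,
      Matrix.mul_assoc]
    abel
  have hz := sylvester_unique A S hdisj _ hX
  have hPix : Pix = Pi + Pihat := by rwa [sub_eq_zero] at hz
  subst hPix
  rw [Matrix.mul_add, eq_sub_iff_add_eq]
  have e : C * Pi + C * Pihat + D * (H * Piξ) + Q * L
      = C * Pihat + D * (H * Piξ) + (C * Pi + Q * L) := by abel
  rw [e]
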